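/- Let n ≥ 1, r ≥ 1, t ≥ 1 be integers and set α = ⌈tn/r⌉ and β = ⌊tn/r⌋ (note α ≥ 1). Let M be any t × (t+r) matrix of linear forms in x_0,…,x_n. Then the following are equivalent: (i) for every integer a ≥ 0, the map Φ_{M,a} : (S_a)^{t+r} → (S_{a+1})^t is injective or surjective; (ii) Φ_{M,β−1} is injective (this condition being vacuous when β = 0) and Φ_{M,α−1} is surjective. (This is the translation of the statement that a kernel bundle 0 → V → O^{t+r} → O(1)^t → 0 on ℙ^n has natural cohomology if and only if H^0(V(β−1)) = 0 and H^1(V(α−1)) = 0.) -/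

import Mathlib

open MvPolynomial
open Module


lemma Finsupp.degree_eq_sum_id {σ : Type*} (f : σ →₀ ℕ) : f.degree = f.sum fun _ => id := rfl

/-- equivalence between degree-a exponent vectors and multisets of size a -/
noncomputable def degEquivSym (n a : ℕ) :
    {d : Fin (n+1) →₀ ℕ | d.degree = a} ≃ Sym (Fin (n+1)) a where
  toFun d := ⟨Finsupp.toMultiset d.1, by
    rw [Finsupp.card_toMultiset, ← Finsupp.degree_eq_sum_id]; exact d.2⟩
  invFun m := ⟨Multiset.toFinsupp m.1, by
    show (Multiset.toFinsupp m.1).degree = a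
    rw [Finsupp.degree_eq_sum_id, Multiset.toFinsupp_sum_eq]
    exact m.2⟩
  left_inv d := by ext : 1; simp
  right_inv m := by ext : 1; simp

noncomputable instance degFintype (n a : ℕ) :
    Fintype {d : Fin (n+1) →₀ ℕ | d.degree = a} :=
  Fintype.ofEquiv _ (degEquivSym n a).symm

lemma degCard (n a : ℕ) :
    Fintype.card {d : Fin (n+1) →₀ ℕ | d.degree = a} = (a + n).choose a := by
  rw [Fintype.card_congr (degEquivSym n a), Sym.card_sym_eq_choose]
  rw [Fintype.card_fin]
  congr 1
  omega

noncomputable def homogEquiv (n a : ℕ) :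
    homogeneousSubmodule (Fin (n+1)) ℂ a ≃ₗ[ℂ]
      ({d : Fin (n+1) →₀ ℕ | d.degree = a} →₀ ℂ) :=
  (LinearEquiv.ofEq _ _ (homogeneousSubmodule_eq_finsupp_supported (Fin (n+1)) ℂ a)).trans
    (AddMonoidAlgebra.supportedEquivFinsupp _)

instance homogFD (n a : ℕ) :
    FiniteDimensional ℂ (homogeneousSubmodule (Fin (n+1)) ℂ a) :=
  Module.Finite.equiv (homogEquiv n a).symm

lemma finrank_homog (n a : ℕ) :
    Module.finrank ℂ (homogeneousSubmodule (Fin (n+1)) ℂ a) = (a + n).choose a := by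
  rw [(homogEquiv n a).finrank_eq, Module.finrank_finsupp_self, degCard]


lemma Finsupp.degree_add' {σ : Type*} (f g : σ →₀ ℕ) :
    (f + g).degree = f.degree + g.degree := by
  simp only [Finsupp.degree_eq_weight_one]
  exact map_add _ f g

lemma Finsupp.degree_single' {σ : Type*} (i : σ) (k : ℕ) :
    (Finsupp.single i k).degree = k := by
  simp only [Finsupp.degree_eq_weight_one, Finsupp.weight_apply]
  simp [Finsupp.sum_single_index]

lemma exists_decomp (n d : ℕ) (N : ℕ) :
    ∀ (f : MvPolynomial (Fin (n+1)) ℂ), f.support.card ≤ N → f.IsHomogeneous (d+1) →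
    ∃ g : Fin (n+1) → MvPolynomial (Fin (n+1)) ℂ,
      (∀ i, (g i).IsHomogeneous d) ∧ f = ∑ i, X i * g i := by
  induction N with
  | zero =>
    intro f hcard hf
    have hf0 : f = 0 := by
      rwa [Nat.le_zero, Finset.card_eq_zero, MvPolynomial.support_eq_empty] at hcard
    exact ⟨0, fun i => isHomogeneous_zero _ _ _, by simp [hf0]⟩
  | succ N ih =>
    intro f hcard hf
    by_cases hf0 : f = 0
    · exact ⟨0, fun i => isHomogeneous_zero _ _ _, by simp [hf0]⟩
    obtain ⟨m, hm⟩ := support_nonempty.mpr hf0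
    set c := coeff m f with hc
    have hc0 : c ≠ 0 := MvPolynomial.mem_support_iff.mp hm
    have hdm : m.degree = d + 1 := by
      by_contra hne
      exact hc0 (hf.coeff_eq_zero hne)
    -- pick a variable occurring in m
    have hm0 : m ≠ 0 := by
      intro h
      rw [h, map_zero] at hdm
      omega
    obtain ⟨i0, hi0⟩ : ∃ i0, 1 ≤ m i0 := by
      by_contra h
      push_neg at h
      exact hm0 (Finsupp.ext fun i => by simpa using Nat.lt_one_iff.mp (h i))
    have hle : Finsupp.single i0 1 ≤ m := Finsupp.single_le_iff.mpr hi0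
    set m' := m - Finsupp.single i0 1 with hm'def
    have hm'add : Finsupp.single i0 1 + m' = m := add_tsub_cancel_of_le hle
    have hdm' : m'.degree = d := by
      have := Finsupp.degree_add' (Finsupp.single i0 1) m'
      rw [hm'add, hdm, Finsupp.degree_single'] at this
      omega
    have hmon : X i0 * monomial m' c = monomial m c := by
      rw [X, monomial_mul, one_mul, hm'add]
    -- the remainder
    set f' := f - monomial m c with hf'def
    have hf'supp : f'.support ⊆ f.support.erase m := by
      intro x hx
      rw [MvPolynomial.mem_support_iff] at hx
      rw [Finset.mem_erase]
      by_cases hxm : x = m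
      · subst hxm
        rw [hf'def, coeff_sub, coeff_monomial, if_pos rfl, ← hc, sub_self] at hx
        exact absurd rfl hx
      · refine ⟨hxm, MvPolynomial.mem_support_iff.mpr ?_⟩
        rw [hf'def, coeff_sub, coeff_monomial, if_neg (fun h => hxm h.symm), sub_zero] at hx
        exact hx
    have hf'card : f'.support.card ≤ N := by
      have := Finset.card_le_card hf'supp
      have := Finset.card_erase_of_mem hm
      omega
    have hf'hom : f'.IsHomogeneous (d+1) := hf.sub (isHomogeneous_monomial c hdm)
    obtain ⟨g, hg, hsum⟩ := ih f' hf'card hf'hom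
    refine ⟨fun i => g i + if i = i0 then monomial m' c else 0, fun i => ?_, ?_⟩
    · refine (hg i).add ?_
      split
      · exact isHomogeneous_monomial c hdm'
      · exact isHomogeneous_zero _ _ _
    · have : f = f' + monomial m c := by rw [hf'def, sub_add_cancel]
      rw [this, hsum]
      rw [Finset.sum_congr rfl (fun i _ => mul_add (X i) (g i) _), Finset.sum_add_distrib]
      congr 1
      rw [Finset.sum_congr rfl (fun i _ => by rw [mul_ite, mul_zero])]
      rw [Finset.sum_ite_eq' Finset.univ i0 (fun i => X i * monomial m' c)]
      simp [hmon]

/-- The map `Φ_{M,a} : (S_a)^p → (S_{a+1})^q` induced by a `q × p` matrix `M` of linear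
forms in `x_0,…,x_n`, sending `(f_1,…,f_p)` to `(Σ_k M_{jk} f_k)_j` (recorded here as a
map into `q`-tuples of polynomials). -/
noncomputable def Phi (n p q a : ℕ) (M : Fin q → Fin p → MvPolynomial (Fin (n+1)) ℂ)
    (v : Fin p → homogeneousSubmodule (Fin (n+1)) ℂ a) :
    Fin q → MvPolynomial (Fin (n+1)) ℂ :=
  fun j => ∑ k, M j k * ((v k : MvPolynomial (Fin (n+1)) ℂ))

/-- `Φ_{M,a} : (S_a)^p → (S_{a+1})^q` is injective. -/
def PhiInjective (n p q a : ℕ) (M : Fin q → Fin p → MvPolynomial (Fin (n+1)) ℂ) : Prop :=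
  Function.Injective (Phi n p q a M)

/-- `Φ_{M,a} : (S_a)^p → (S_{a+1})^q` is surjective. -/
def PhiSurjective (n p q a : ℕ) (M : Fin q → Fin p → MvPolynomial (Fin (n+1)) ℂ) : Prop :=
  ∀ w : Fin q → MvPolynomial (Fin (n+1)) ℂ,
    (∀ j, w j ∈ homogeneousSubmodule (Fin (n+1)) ℂ (a+1)) →
    ∃ v, Phi n p q a M v = w


lemma Phi_mem (n p q a : ℕ) (M : Fin q → Fin p → MvPolynomial (Fin (n+1)) ℂ)
    (hM : ∀ j k, M j k ∈ homogeneousSubmodule (Fin (n+1)) ℂ 1)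
    (v : Fin p → homogeneousSubmodule (Fin (n+1)) ℂ a) (j : Fin q) :
    Phi n p q a M v j ∈ homogeneousSubmodule (Fin (n+1)) ℂ (a+1) := by
  rw [mem_homogeneousSubmodule]
  apply MvPolynomial.IsHomogeneous.sum
  intro k _
  have h1 : (M j k).IsHomogeneous 1 := (mem_homogeneousSubmodule _ _).mp (hM j k)
  have h2 : ((v k : MvPolynomial (Fin (n+1)) ℂ)).IsHomogeneous a :=
    (mem_homogeneousSubmodule _ _).mp (v k).2
  have := h1.mul h2
  rwa [Nat.add_comm 1 a] at this

noncomputable def PhiL (n p q a : ℕ) (M : Fin q → Fin p → MvPolynomial (Fin (n+1)) ℂ)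
    (hM : ∀ j k, M j k ∈ homogeneousSubmodule (Fin (n+1)) ℂ 1) :
    (Fin p → homogeneousSubmodule (Fin (n+1)) ℂ a) →ₗ[ℂ]
      (Fin q → homogeneousSubmodule (Fin (n+1)) ℂ (a+1)) where
  toFun v j := ⟨Phi n p q a M v j, Phi_mem n p q a M hM v j⟩
  map_add' v w := by
    funext j
    apply Subtype.ext
    simp [Phi, mul_add, Finset.sum_add_distrib]
  map_smul' c v := by
    funext j
    apply Subtype.ext
    simp [Phi, Finset.mul_sum, mul_left_comm, Finset.smul_sum, mul_smul_comm]

lemma phiInjective_iff (n p q a : ℕ) (M : Fin q → Fin p → MvPolynomial (Fin (n+1)) ℂ)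
    (hM : ∀ j k, M j k ∈ homogeneousSubmodule (Fin (n+1)) ℂ 1) :
    PhiInjective n p q a M ↔ Function.Injective (PhiL n p q a M hM) := by
  constructor
  · intro h v v' hvv'
    apply h
    funext j
    exact congrArg Subtype.val (congrFun hvv' j)
  · intro h v v' hvv'
    apply h
    funext j
    apply Subtype.ext
    exact congrFun hvv' j

lemma phiSurjective_iff (n p q a : ℕ) (M : Fin q → Fin p → MvPolynomial (Fin (n+1)) ℂ)
    (hM : ∀ j k, M j k ∈ homogeneousSubmodule (Fin (n+1)) ℂ 1) :
    PhiSurjective n p q a M ↔ Function.Surjective (PhiL n p q a M hM) := by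
  constructor
  · intro h w
    obtain ⟨v, hv⟩ := h (fun j => (w j : MvPolynomial (Fin (n+1)) ℂ)) (fun j => (w j).2)
    exact ⟨v, funext fun j => Subtype.ext (congrFun hv j)⟩
  · intro h w hw
    obtain ⟨v, hv⟩ := h (fun j => ⟨w j, hw j⟩)
    exact ⟨v, funext fun j => congrArg Subtype.val (congrFun hv j)⟩
open MvPolynomial

lemma inj_step (n p q a : ℕ) (M : Fin q → Fin p → MvPolynomial (Fin (n+1)) ℂ)
    (h : PhiInjective n p q (a+1) M) : PhiInjective n p q a M := by
  intro v v' hvv'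
  have lift : ∀ (u : Fin p → homogeneousSubmodule (Fin (n+1)) ℂ a) (k : Fin p),
      X (0 : Fin (n+1)) * (u k : MvPolynomial (Fin (n+1)) ℂ) ∈
        homogeneousSubmodule (Fin (n+1)) ℂ (a+1) := by
    intro u k
    rw [mem_homogeneousSubmodule]
    have := (isHomogeneous_X ℂ (0 : Fin (n+1))).mul ((mem_homogeneousSubmodule _ _).mp (u k).2)
    rwa [Nat.add_comm 1 a] at this
  have key : ∀ u : Fin p → homogeneousSubmodule (Fin (n+1)) ℂ a,
      Phi n p q (a+1) M (fun k => ⟨_, lift u k⟩) = fun j => X 0 * Phi n p q a M u j := by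
    intro u
    funext j
    simp only [Phi, Finset.mul_sum]
    exact Finset.sum_congr rfl fun k _ => by ring
  have := h (a₁ := fun k => ⟨_, lift v k⟩) (a₂ := fun k => ⟨_, lift v' k⟩) (by
    rw [key, key, hvv'])
  funext k
  have hk := congrArg Subtype.val (congrFun this k)
  exact Subtype.ext (mul_left_cancel₀ (X_ne_zero 0) hk)

lemma surj_step_aux (n d : ℕ) (f : MvPolynomial (Fin (n+1)) ℂ) (hf : f.IsHomogeneous (d+1)) :
    ∃ g : Fin (n+1) → MvPolynomial (Fin (n+1)) ℂ,
      (∀ i, (g i).IsHomogeneous d) ∧ f = ∑ i, X i * g i :=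
  exists_decomp n d f.support.card f le_rfl hf

lemma surj_step (n p q a : ℕ) (M : Fin q → Fin p → MvPolynomial (Fin (n+1)) ℂ)
    (h : PhiSurjective n p q a M) : PhiSurjective n p q (a+1) M := by
  intro w hw
  -- decompose each w j
  have hdec : ∀ j, ∃ g : Fin (n+1) → MvPolynomial (Fin (n+1)) ℂ,
      (∀ i, (g i).IsHomogeneous (a+1)) ∧ w j = ∑ i, X i * g i := by
    intro j
    exact surj_step_aux n (a+1) (w j) ((mem_homogeneousSubmodule _ _).mp (hw j))
  choose g hg hgsum using hdec
  -- for each variable i, solve for the tuple (j ↦ g j i)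
  have hsolve : ∀ i : Fin (n+1), ∃ u : Fin p → homogeneousSubmodule (Fin (n+1)) ℂ a,
      Phi n p q a M u = fun j => g j i := by
    intro i
    exact h (fun j => g j i) (fun j => (mem_homogeneousSubmodule _ _).mpr (hg j i))
  choose u hu using hsolve
  refine ⟨fun k => ⟨∑ i, X i * (u i k : MvPolynomial (Fin (n+1)) ℂ), ?_⟩, ?_⟩
  · rw [mem_homogeneousSubmodule]
    apply IsHomogeneous.sum
    intro i _
    have := (isHomogeneous_X ℂ i).mul ((mem_homogeneousSubmodule _ _).mp (u i k).2)
    rwa [Nat.add_comm 1 a] at this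
  · funext j
    rw [hgsum j]
    simp only [Phi]
    simp only [Finset.mul_sum]
    rw [Finset.sum_comm]
    refine Finset.sum_congr rfl fun i _ => ?_
    have hui := congrFun (hu i) j
    simp only [Phi] at hui
    rw [← hui, Finset.mul_sum]
    exact Finset.sum_congr rfl fun k _ => by ring

lemma inj_desc (n p q : ℕ) (M : Fin q → Fin p → MvPolynomial (Fin (n+1)) ℂ)
    (a c : ℕ) (h : PhiInjective n p q (a + c) M) : PhiInjective n p q a M := by
  induction c with
  | zero => exact h
  | succ c ih => exact ih (inj_step n p q (a + c) M h)

lemma surj_asc (n p q : ℕ) (M : Fin q → Fin p → MvPolynomial (Fin (n+1)) ℂ)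
    (a c : ℕ) (h : PhiSurjective n p q a M) : PhiSurjective n p q (a + c) M := by
  induction c with
  | zero => exact h
  | succ c ih => exact surj_step n p q (a + c) M ih


lemma finrank_pi_homog (n a p : ℕ) :
    finrank ℂ (Fin p → homogeneousSubmodule (Fin (n+1)) ℂ a) = p * (a + n).choose a := by
  rw [Module.finrank_pi_fintype, Finset.sum_congr rfl (fun i _ => finrank_homog n a),
    Finset.sum_const, Finset.card_univ, Fintype.card_fin, smul_eq_mul]

lemma choose_id (n b : ℕ) :
    (b + n + 1) * (b + n).choose b = (b + 1 + n).choose (b + 1) * (b + 1) := by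
  have := Nat.add_one_mul_choose_eq (b + n) b
  rw [show b + 1 + n = b + n + 1 by omega]
  exact this

lemma rank_compare (n r t b : ℕ) :
    ((r * (b+1) ≤ t * n →
      (t + r) * (b + n).choose b ≤ t * ((b + 1 + n).choose (b+1))) ∧
     (t * n ≤ r * (b+1) →
      t * ((b + 1 + n).choose (b+1)) ≤ (t + r) * (b + n).choose b)) := by
  have hid := choose_id n b
  have hpos : 0 < (b + n).choose b := Nat.choose_pos (Nat.le_add_right b n)
  constructor
  · intro h
    apply Nat.le_of_mul_le_mul_right _ (Nat.succ_pos b)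
    calc (t + r) * (b + n).choose b * (b + 1)
        = ((t + r) * (b + 1)) * (b + n).choose b := by ring
      _ ≤ (t * (b + n + 1)) * (b + n).choose b := by
          apply Nat.mul_le_mul_right
          have : (t + r) * (b + 1) = t * (b+1) + r * (b+1) := by ring
          have h2 : t * (b + n + 1) = t * (b+1) + t * n := by ring
          omega
      _ = t * ((b + n + 1) * (b + n).choose b) := by ring
      _ = t * ((b + 1 + n).choose (b+1) * (b+1)) := by rw [hid]
      _ = t * (b + 1 + n).choose (b+1) * (b + 1) := by ring
  · intro h
    apply Nat.le_of_mul_le_mul_right _ (Nat.succ_pos b)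
    calc t * (b + 1 + n).choose (b+1) * (b + 1)
        = t * ((b + 1 + n).choose (b+1) * (b+1)) := by ring
      _ = t * ((b + n + 1) * (b + n).choose b) := by rw [← hid]
      _ = (t * (b + n + 1)) * (b + n).choose b := by ring
      _ ≤ ((t + r) * (b + 1)) * (b + n).choose b := by
          apply Nat.mul_le_mul_right
          have : (t + r) * (b + 1) = t * (b+1) + r * (b+1) := by ring
          have h2 : t * (b + n + 1) = t * (b+1) + t * n := by ring
          omega
      _ = (t + r) * (b + n).choose b * (b + 1) := by ring

lemma key1 (n r t b : ℕ)
    (M : Fin t → Fin (t + r) → MvPolynomial (Fin (n+1)) ℂ)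
    (hM : ∀ j k, M j k ∈ homogeneousSubmodule (Fin (n+1)) ℂ 1)
    (hb : r * (b + 1) ≤ t * n)
    (hs : PhiSurjective n (t + r) t b M) : PhiInjective n (t + r) t b M := by
  have hsL := (phiSurjective_iff n (t+r) t b M hM).mp hs
  set L := PhiL n (t+r) t b M hM with hL
  have h1 : finrank ℂ (Fin t → homogeneousSubmodule (Fin (n+1)) ℂ (b+1))
      ≤ finrank ℂ (Fin (t+r) → homogeneousSubmodule (Fin (n+1)) ℂ b) := by
    have hrange := LinearMap.finrank_range_le L
    rwa [LinearMap.range_eq_top.mpr hsL, finrank_top] at hrange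
  have h2 := (rank_compare n r t b).1 hb
  have heq : finrank ℂ (Fin (t+r) → homogeneousSubmodule (Fin (n+1)) ℂ b)
      = finrank ℂ (Fin t → homogeneousSubmodule (Fin (n+1)) ℂ (b+1)) := by
    rw [finrank_pi_homog, finrank_pi_homog] at *
    omega
  rw [phiInjective_iff n (t+r) t b M hM]
  exact (LinearMap.injective_iff_surjective_of_finrank_eq_finrank heq).mpr hsL

lemma key2 (n r t b : ℕ)
    (M : Fin t → Fin (t + r) → MvPolynomial (Fin (n+1)) ℂ)
    (hM : ∀ j k, M j k ∈ homogeneousSubmodule (Fin (n+1)) ℂ 1)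
    (hb : t * n ≤ r * (b + 1))
    (hi : PhiInjective n (t + r) t b M) : PhiSurjective n (t + r) t b M := by
  have hiL := (phiInjective_iff n (t+r) t b M hM).mp hi
  set L := PhiL n (t+r) t b M hM with hL
  have h1 : finrank ℂ (Fin (t+r) → homogeneousSubmodule (Fin (n+1)) ℂ b)
      ≤ finrank ℂ (Fin t → homogeneousSubmodule (Fin (n+1)) ℂ (b+1)) :=
    LinearMap.finrank_le_finrank_of_injective hiL
  have h2 := (rank_compare n r t b).2 hb
  have heq : finrank ℂ (Fin (t+r) → homogeneousSubmodule (Fin (n+1)) ℂ b)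
      = finrank ℂ (Fin t → homogeneousSubmodule (Fin (n+1)) ℂ (b+1)) := by
    rw [finrank_pi_homog, finrank_pi_homog] at *
    omega
  rw [phiSurjective_iff n (t+r) t b M hM]
  exact (LinearMap.injective_iff_surjective_of_finrank_eq_finrank heq).mp hiL

/-- Translation of Lemma `lem-basicbound`: for a `t × (t+r)` matrix `M` of linear forms
in `x_0,…,x_n`, with `α = ⌈tn/r⌉` and `β = ⌊tn/r⌋`, every map
`Φ_{M,a} : (S_a)^{t+r} → (S_{a+1})^t` (for `a ≥ 0`) is injective or surjective if and
only if `Φ_{M,β−1}` is injective (vacuously when `β = 0`) and `Φ_{M,α−1}` is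
surjective. -/
theorem stmt7 (n r t : ℕ) (hn : 1 ≤ n) (hr : 1 ≤ r) (ht : 1 ≤ t)
    (M : Fin t → Fin (t + r) → MvPolynomial (Fin (n+1)) ℂ)
    (hM : ∀ j k, M j k ∈ homogeneousSubmodule (Fin (n+1)) ℂ 1) :
    (∀ a : ℕ, PhiInjective n (t + r) t a M ∨ PhiSurjective n (t + r) t a M) ↔
      ((1 ≤ t * n / r → PhiInjective n (t + r) t (t * n / r - 1) M) ∧
        PhiSurjective n (t + r) t ((t * n + r - 1) / r - 1) M) := by
  have hm1 : 0 < t * n := Nat.mul_pos ht hn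
  set β := t * n / r with hβdef
  set α := (t * n + r - 1) / r with hαdef
  have hβle : r * β ≤ t * n := by rw [mul_comm]; exact Nat.div_mul_le_self _ _
  have hαge : t * n ≤ r * α := by
    have h := le_smul_ceilDiv (b := t * n) (show 0 < r from hr)
    rwa [smul_eq_mul, Nat.ceilDiv_eq_add_pred_div] at h
  have hαβ : α ≤ β + 1 := by
    have h1 : (t * n + r - 1) / r ≤ (t * n + r) / r := Nat.div_le_div_right (by omega)
    rwa [Nat.add_div_right _ hr] at h1
  have hα1 : 1 ≤ α := Nat.one_le_iff_ne_zero.mpr (fun h0 => by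
    rw [h0, mul_zero] at hαge; omega)
  clear_value β α
  constructor
  · intro H
    refine ⟨?_, ?_⟩
    · intro hβ1
      rcases H (β - 1) with h | h
      · exact h
      · exact key1 n r t (β - 1) M hM (by rw [show β - 1 + 1 = β by omega]; exact hβle) h
    · rcases H (α - 1) with h | h
      · exact key2 n r t (α - 1) M hM (by rw [show α - 1 + 1 = α by omega]; exact hαge) h
      · exact h
  · rintro ⟨h1, h2⟩ a
    by_cases hca : a + 1 ≤ β
    · left
      have hinj := inj_desc n (t + r) t M a (β - 1 - a) ?_
      · exact hinj
      · rw [show a + (β - 1 - a) = β - 1 by omega]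
        exact h1 (by omega)
    · right
      have hs := surj_asc n (t + r) t M (α - 1) (a - (α - 1)) h2
      rwa [show α - 1 + (a - (α - 1)) = a by omega] at hs
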